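/- arXiv:2404.11561 — 5 statements merged into one kernel-verified Lean document; each statement's English description precedes it below -/
import Mathlib

section
/- Let C be a category with full subcategories C₀ and C₁, and let C₀₁ = C₀ ∩ C₁. Assume every object of C lies in C₀ or in C₁, and that for every morphism c → c' in C, if c' lies in C₀ then c lies in C₀, and if c' lies in C₁ then c lies in C₁. Then C is the pushout of the diagram C₀ ← C₀₁ → C₁ in the category of (small) categories. -/
open CategoryTheory

section Glue

open CategoryTheory.Limits

variable {C : Type} [SmallCategory C] {P₀ P₁ : C → Prop}
variable {D : Type*} [Category D]
variable (F₀ : ObjectProperty.FullSubcategory P₀ ⥤ D) (F₁ : ObjectProperty.FullSubcategory P₁ ⥤ D)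

variable (hcov : ∀ c : C, P₀ c ∨ P₁ c)
variable (h₀ : ∀ {c c' : C}, (c ⟶ c') → P₀ c' → P₀ c)
variable (h₁ : ∀ {c c' : C}, (c ⟶ c') → P₁ c' → P₁ c)
variable (hF : (ObjectProperty.ιOfLE (P := fun c => P₀ c ∧ P₁ c) (P' := P₀) fun _ h => h.1) ⋙ F₀
  = (ObjectProperty.ιOfLE (P := fun c => P₀ c ∧ P₁ c) (P' := P₁) fun _ h => h.2) ⋙ F₁)

include hF in
lemma glue_objeq (c : C) (hc0 : P₀ c) (hc1 : P₁ c) :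
    F₀.obj ⟨c, hc0⟩ = F₁.obj ⟨c, hc1⟩ :=
  Functor.congr_obj hF ⟨c, hc0, hc1⟩

include hF in
lemma glue_mapeq {c c' : C} (f : c ⟶ c') (hc0 : P₀ c) (hc1 : P₁ c)
    (hc0' : P₀ c') (hc1' : P₁ c') :
    F₀.map (show (⟨c, hc0⟩ : ObjectProperty.FullSubcategory P₀) ⟶ ⟨c', hc0'⟩ from ObjectProperty.homMk f)
      = eqToHom (glue_objeq F₀ F₁ hF c hc0 hc1)
        ≫ F₁.map (show (⟨c, hc1⟩ : ObjectProperty.FullSubcategory P₁) ⟶ ⟨c', hc1'⟩ from ObjectProperty.homMk f)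
        ≫ eqToHom (glue_objeq F₀ F₁ hF c' hc0' hc1').symm :=
  Functor.congr_hom hF (X := ⟨c, hc0, hc1⟩) (Y := ⟨c', hc0', hc1'⟩) (ObjectProperty.homMk f)

open Classical in
noncomputable def glueObj (c : C) : D :=
  if h : P₀ c then F₀.obj ⟨c, h⟩ else F₁.obj ⟨c, (hcov c).resolve_left h⟩

lemma glueObj_eq₀ (c : C) (hc : P₀ c) : glueObj F₀ F₁ hcov c = F₀.obj ⟨c, hc⟩ :=
  dif_pos hc

include hF in
lemma glueObj_eq₁ (c : C) (hc : P₁ c) : glueObj F₀ F₁ hcov c = F₁.obj ⟨c, hc⟩ := by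
  by_cases h : P₀ c
  · exact (dif_pos h).trans (glue_objeq F₀ F₁ hF c h hc)
  · exact dif_neg h

open Classical in
noncomputable def glueMap {c c' : C} (f : c ⟶ c') :
    glueObj F₀ F₁ hcov c ⟶ glueObj F₀ F₁ hcov c' :=
  if h' : P₀ c' then
    eqToHom (glueObj_eq₀ F₀ F₁ hcov c (h₀ f h'))
      ≫ F₀.map (show (⟨c, h₀ f h'⟩ : ObjectProperty.FullSubcategory P₀) ⟶ ⟨c', h'⟩ from ObjectProperty.homMk f)
      ≫ eqToHom (glueObj_eq₀ F₀ F₁ hcov c' h').symm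
  else
    eqToHom (glueObj_eq₁ F₀ F₁ hcov hF c (h₁ f ((hcov c').resolve_left h')))
      ≫ F₁.map (show (⟨c, h₁ f ((hcov c').resolve_left h')⟩ : ObjectProperty.FullSubcategory P₁) ⟶
            ⟨c', (hcov c').resolve_left h'⟩ from ObjectProperty.homMk f)
      ≫ eqToHom (glueObj_eq₁ F₀ F₁ hcov hF c' ((hcov c').resolve_left h')).symm

lemma glueMap_eq₀ {c c' : C} (f : c ⟶ c') (hc : P₀ c) (hc' : P₀ c') :
    glueMap F₀ F₁ hcov h₀ h₁ hF f
      = eqToHom (glueObj_eq₀ F₀ F₁ hcov c hc)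
        ≫ F₀.map (show (⟨c, hc⟩ : ObjectProperty.FullSubcategory P₀) ⟶ ⟨c', hc'⟩ from ObjectProperty.homMk f)
        ≫ eqToHom (glueObj_eq₀ F₀ F₁ hcov c' hc').symm := by
  rw [glueMap, dif_pos hc']

lemma glueMap_eq₁ {c c' : C} (f : c ⟶ c') (hc : P₁ c) (hc' : P₁ c') :
    glueMap F₀ F₁ hcov h₀ h₁ hF f
      = eqToHom (glueObj_eq₁ F₀ F₁ hcov hF c hc)
        ≫ F₁.map (show (⟨c, hc⟩ : ObjectProperty.FullSubcategory P₁) ⟶ ⟨c', hc'⟩ from ObjectProperty.homMk f)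
        ≫ eqToHom (glueObj_eq₁ F₀ F₁ hcov hF c' hc').symm := by
  rw [glueMap]
  by_cases h' : P₀ c'
  · rw [dif_pos h']
    rw [glue_mapeq F₀ F₁ hF f (h₀ f h') hc h' hc']
    simp [eqToHom_trans]
  · rw [dif_neg h']

noncomputable def glue : C ⥤ D where
  obj := glueObj F₀ F₁ hcov
  map := glueMap F₀ F₁ hcov h₀ h₁ hF
  map_id c := by
    show glueMap F₀ F₁ hcov h₀ h₁ hF (𝟙 c) = 𝟙 (glueObj F₀ F₁ hcov c)
    rcases hcov c with hc | hc
    · rw [glueMap_eq₀ F₀ F₁ hcov h₀ h₁ hF (𝟙 c) hc hc,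
        show (show (⟨c, hc⟩ : ObjectProperty.FullSubcategory P₀) ⟶ ⟨c, hc⟩ from ObjectProperty.homMk (𝟙 c)) = 𝟙 _ from rfl]
      simp
    · rw [glueMap_eq₁ F₀ F₁ hcov h₀ h₁ hF (𝟙 c) hc hc,
        show (show (⟨c, hc⟩ : ObjectProperty.FullSubcategory P₁) ⟶ ⟨c, hc⟩ from ObjectProperty.homMk (𝟙 c)) = 𝟙 _ from rfl]
      simp
  map_comp := by
    intro c c' c'' f g
    show glueMap F₀ F₁ hcov h₀ h₁ hF (f ≫ g)
      = glueMap F₀ F₁ hcov h₀ h₁ hF f ≫ glueMap F₀ F₁ hcov h₀ h₁ hF g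
    rcases hcov c'' with hc'' | hc''
    · have hc' := h₀ g hc''
      have hc := h₀ f hc'
      rw [glueMap_eq₀ F₀ F₁ hcov h₀ h₁ hF (f ≫ g) hc hc'',
        glueMap_eq₀ F₀ F₁ hcov h₀ h₁ hF f hc hc',
        glueMap_eq₀ F₀ F₁ hcov h₀ h₁ hF g hc' hc'']
      have e : F₀.map (X := ⟨c, hc⟩) (Y := ⟨c'', hc''⟩) (ObjectProperty.homMk (f ≫ g))
          = F₀.map (X := ⟨c, hc⟩) (Y := ⟨c', hc'⟩) (ObjectProperty.homMk f)
            ≫ F₀.map (X := ⟨c', hc'⟩) (Y := ⟨c'', hc''⟩) (ObjectProperty.homMk g) := F₀.map_comp (X := ⟨c, hc⟩) (Y := ⟨c', hc'⟩) (Z := ⟨c'', hc''⟩) (ObjectProperty.homMk f) (ObjectProperty.homMk g)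
      dsimp only at e ⊢
      rw [e]
      simp
    · have hc' := h₁ g hc''
      have hc := h₁ f hc'
      rw [glueMap_eq₁ F₀ F₁ hcov h₀ h₁ hF (f ≫ g) hc hc'',
        glueMap_eq₁ F₀ F₁ hcov h₀ h₁ hF f hc hc',
        glueMap_eq₁ F₀ F₁ hcov h₀ h₁ hF g hc' hc'']
      have e : F₁.map (X := ⟨c, hc⟩) (Y := ⟨c'', hc''⟩) (ObjectProperty.homMk (f ≫ g))
          = F₁.map (X := ⟨c, hc⟩) (Y := ⟨c', hc'⟩) (ObjectProperty.homMk f)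
            ≫ F₁.map (X := ⟨c', hc'⟩) (Y := ⟨c'', hc''⟩) (ObjectProperty.homMk g) := F₁.map_comp (X := ⟨c, hc⟩) (Y := ⟨c', hc'⟩) (Z := ⟨c'', hc''⟩) (ObjectProperty.homMk f) (ObjectProperty.homMk g)
      dsimp only at e ⊢
      rw [e]
      simp

lemma glue_comp₀ : ObjectProperty.ι P₀ ⋙ glue F₀ F₁ hcov h₀ h₁ hF = F₀ := by
  refine CategoryTheory.Functor.ext (fun (c : ObjectProperty.FullSubcategory P₀) => glueObj_eq₀ F₀ F₁ hcov c.obj c.property) ?_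
  intro c c' f
  exact glueMap_eq₀ F₀ F₁ hcov h₀ h₁ hF f.hom c.property c'.property

lemma glue_comp₁ : ObjectProperty.ι P₁ ⋙ glue F₀ F₁ hcov h₀ h₁ hF = F₁ := by
  refine CategoryTheory.Functor.ext (fun (c : ObjectProperty.FullSubcategory P₁) => glueObj_eq₁ F₀ F₁ hcov hF c.obj c.property) ?_
  intro c c' f
  exact glueMap_eq₁ F₀ F₁ hcov h₀ h₁ hF f.hom c.property c'.property

lemma glue_uniq (m : C ⥤ D)
    (hm₀ : ObjectProperty.ι P₀ ⋙ m = F₀)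
    (hm₁ : ObjectProperty.ι P₁ ⋙ m = F₁) :
    m = glue F₀ F₁ hcov h₀ h₁ hF := by
  have hobj : ∀ c : C, m.obj c = glueObj F₀ F₁ hcov c := by
    intro c
    rcases hcov c with hc | hc
    · rw [glueObj_eq₀ F₀ F₁ hcov c hc]
      exact Functor.congr_obj hm₀ ⟨c, hc⟩
    · rw [glueObj_eq₁ F₀ F₁ hcov hF c hc]
      exact Functor.congr_obj hm₁ ⟨c, hc⟩
  refine CategoryTheory.Functor.ext hobj ?_
  intro c c' f
  rcases hcov c' with hc' | hc'
  · have hc := h₀ f hc'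
    have := Functor.congr_hom hm₀ (X := ⟨c, hc⟩) (Y := ⟨c', hc'⟩) (ObjectProperty.homMk f)
    rw [show m.map f = (ObjectProperty.ι P₀ ⋙ m).map
        (show (⟨c, hc⟩ : ObjectProperty.FullSubcategory P₀) ⟶ ⟨c', hc'⟩ from ObjectProperty.homMk f) from rfl, this]
    show _ = eqToHom (hobj c) ≫ glueMap F₀ F₁ hcov h₀ h₁ hF f ≫ eqToHom (hobj c').symm
    rw [glueMap_eq₀ F₀ F₁ hcov h₀ h₁ hF f hc hc']
    simp
  · have hc := h₁ f hc'
    have := Functor.congr_hom hm₁ (X := ⟨c, hc⟩) (Y := ⟨c', hc'⟩) (ObjectProperty.homMk f)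
    rw [show m.map f = (ObjectProperty.ι P₁ ⋙ m).map
        (show (⟨c, hc⟩ : ObjectProperty.FullSubcategory P₁) ⟶ ⟨c', hc'⟩ from ObjectProperty.homMk f) from rfl, this]
    show _ = eqToHom (hobj c) ≫ glueMap F₀ F₁ hcov h₀ h₁ hF f ≫ eqToHom (hobj c').symm
    rw [glueMap_eq₁ F₀ F₁ hcov h₀ h₁ hF f hc hc']
    simp

end Glue

/-- Let `C` be a category with full subcategories `C₀`, `C₁`, and `C₀₁ = C₀ ∩ C₁`. If
every object lies in `C₀` or `C₁`, and for every morphism `c → c'` the source lies in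
`C₀` (resp. `C₁`) whenever the target does, then `C` is the pushout of
`C₀ ← C₀₁ → C₁` in the category of small categories. -/
theorem stmt0 (C : Type) [SmallCategory C] (P₀ P₁ : C → Prop)
    (hcov : ∀ c : C, P₀ c ∨ P₁ c)
    (h₀ : ∀ {c c' : C}, (c ⟶ c') → P₀ c' → P₀ c)
    (h₁ : ∀ {c c' : C}, (c ⟶ c') → P₁ c' → P₁ c) :
    IsPushout
      (Z := Cat.of (ObjectProperty.FullSubcategory fun c => P₀ c ∧ P₁ c))
      (X := Cat.of (ObjectProperty.FullSubcategory P₀))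
      (Y := Cat.of (ObjectProperty.FullSubcategory P₁))
      (P := Cat.of C)
      (ObjectProperty.ιOfLE (P := fun c => P₀ c ∧ P₁ c) (P' := P₀) fun _ h => h.1).toCatHom
      (ObjectProperty.ιOfLE (P := fun c => P₀ c ∧ P₁ c) (P' := P₁) fun _ h => h.2).toCatHom
      (ObjectProperty.ι P₀).toCatHom
      (ObjectProperty.ι P₁).toCatHom := by
  refine ⟨⟨rfl⟩, ⟨?_⟩⟩
  exact Limits.PushoutCocone.IsColimit.mk _
    (fun s => (glue s.inl.toFunctor s.inr.toFunctor hcov h₀ h₁ (congrArg Cat.Hom.toFunctor s.condition)).toCatHom)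
    (fun s => Cat.ext (glue_comp₀ s.inl.toFunctor s.inr.toFunctor hcov h₀ h₁ (congrArg Cat.Hom.toFunctor s.condition)))
    (fun s => Cat.ext (glue_comp₁ s.inl.toFunctor s.inr.toFunctor hcov h₀ h₁ (congrArg Cat.Hom.toFunctor s.condition)))
    (fun s m hm₀ hm₁ => Cat.ext (glue_uniq s.inl.toFunctor s.inr.toFunctor hcov h₀ h₁ (congrArg Cat.Hom.toFunctor s.condition) m.toFunctor
      (congrArg Cat.Hom.toFunctor hm₀) (congrArg Cat.Hom.toFunctor hm₁)))
end

section
/- Let I be a finite nonempty set and Tw(I) the category whose objects are diagrams I ↠ J ↠ K of surjections of finite nonempty sets, with morphisms from (I → J₁ → K₁) to (I → J₂ → K₂) given by a surjection J₁ → J₂ under I and a surjection K₂ → K₁ such that the composite J₁ → J₂ → K₂ → K₁ equals J₁ → K₁. Let ⁰Tw(I) ⊆ Tw(I) be the full subcategory of objects (I →ᵖ J → K) where p is a bijection. Then the inclusion j : ⁰Tw(I) → Tw(I) admits a right adjoint j^R sending (I →ᵖ J →ᑫ K) to (I →^{id} I →^{q∘p} K). -/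
open CategoryTheory Function Limits

/-- An object of the category `Tw(I)`: a diagram `I ↠ J ↠ K` of surjections of
finite nonempty sets. -/
structure TwObj (I : Type) : Type 1 where
  J : Type
  K : Type
  jFin : Finite J
  kFin : Finite K
  jNe : Nonempty J
  kNe : Nonempty K
  p : I → J
  q : J → K
  hp : Function.Surjective p
  hq : Function.Surjective q

/-- A morphism in `Tw(I)` from `(I → J₁ → K₁)` to `(I → J₂ → K₂)`: a surjection
`J₁ → J₂` under `I` together with a surjection `K₂ → K₁` such that the composite
`J₁ → J₂ → K₂ → K₁` equals `J₁ → K₁`. -/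
structure TwHom {I : Type} (A B : TwObj I) : Type where
  φ : A.J → B.J
  ψ : B.K → A.K
  hφ : Function.Surjective φ
  hψ : Function.Surjective ψ
  hp : ∀ i, φ (A.p i) = B.p i
  hq : ∀ j, ψ (B.q (φ j)) = A.q j

theorem TwHom.ext' {I : Type} {A B : TwObj I} :
    ∀ {f g : TwHom A B}, f.φ = g.φ → f.ψ = g.ψ → f = g
  | ⟨_, _, _, _, _, _⟩, ⟨_, _, _, _, _, _⟩, rfl, rfl => rfl

instance twCategory (I : Type) : Category (TwObj I) where
  Hom A B := TwHom A B
  id A := ⟨_root_.id, _root_.id, Function.surjective_id, Function.surjective_id,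
    fun _ => rfl, fun _ => rfl⟩
  comp := fun f g => ⟨g.φ ∘ f.φ, f.ψ ∘ g.ψ, g.hφ.comp f.hφ, f.hψ.comp g.hψ,
    fun i => by simp only [Function.comp_apply, f.hp, g.hp],
    fun j => by simp only [Function.comp_apply, g.hq, f.hq]⟩
  id_comp := fun f => TwHom.ext' rfl rfl
  comp_id := fun f => TwHom.ext' rfl rfl
  assoc := fun f g h => TwHom.ext' rfl rfl


section Aux

variable {I : Type} [Finite I] [Nonempty I]

/-- The object part of the right adjoint. -/
abbrev RObj (A : TwObj I) : TwObj I :=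
  { J := I, K := A.K, jFin := ‹Finite I›, kFin := A.kFin, jNe := ‹Nonempty I›,
    kNe := A.kNe, p := _root_.id, q := A.q ∘ A.p,
    hp := Function.surjective_id, hq := A.hq.comp A.hp }

/-- The right adjoint functor. -/
def Rfun (I : Type) [Finite I] [Nonempty I] :
    TwObj I ⥤ ObjectProperty.FullSubcategory (fun A : TwObj I => Function.Bijective A.p) where
  obj A := ⟨RObj A, Function.bijective_id⟩
  map {A B} f :=
    ObjectProperty.homMk (⟨_root_.id, f.ψ, Function.surjective_id, f.hψ, fun _ => rfl,
      fun j => by simpa [← f.hp j] using f.hq (A.p j)⟩ : TwHom (RObj A) (RObj B))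
  map_id A := ObjectProperty.hom_ext _ (TwHom.ext' rfl rfl)
  map_comp f g := ObjectProperty.hom_ext _ (TwHom.ext' rfl rfl)

noncomputable def homFwd {X : ObjectProperty.FullSubcategory (fun A : TwObj I => Function.Bijective A.p)} {A : TwObj I}
    (f : (ObjectProperty.ι _).obj X ⟶ A) : X ⟶ (Rfun I).obj A := by
  refine ObjectProperty.homMk ?_
  show TwHom X.obj (RObj A)
  refine ⟨fun j => (Equiv.ofBijective _ X.property).symm j, f.ψ,
    (Equiv.ofBijective _ X.property).symm.surjective, f.hψ,
    fun i => (Equiv.ofBijective _ X.property).symm_apply_apply i, fun j => ?_⟩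
  have h1 : f.φ j = A.p ((Equiv.ofBijective _ X.property).symm j) := by
    conv_lhs => rw [← (Equiv.ofBijective _ X.property).apply_symm_apply j]
    exact f.hp _
  show f.ψ (A.q (A.p ((Equiv.ofBijective _ X.property).symm j))) = X.obj.q j
  rw [← h1]; exact f.hq j

def homBwd {X : ObjectProperty.FullSubcategory (fun A : TwObj I => Function.Bijective A.p)} {A : TwObj I}
    (g : X ⟶ (Rfun I).obj A) : (ObjectProperty.ι _).obj X ⟶ A := by
  have g' : TwHom X.obj (RObj A) := g.hom
  exact ⟨fun j => A.p (g'.φ j), g'.ψ, A.hp.comp g'.hφ, g'.hψ,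
    fun i => by show A.p (g'.φ (X.obj.p i)) = A.p i; rw [show g'.φ (X.obj.p i) = i from g'.hp i],
    fun j => g'.hq j⟩

lemma gphi_eq {X : ObjectProperty.FullSubcategory (fun A : TwObj I => Function.Bijective A.p)} {A : TwObj I}
    (g : X ⟶ (Rfun I).obj A) (j : X.obj.J) :
    (g.hom : TwHom X.obj (RObj A)).φ j = (Equiv.ofBijective _ X.property).symm j := by
  obtain ⟨i, rfl⟩ := X.property.surjective j
  rw [show (g.hom : TwHom X.obj (RObj A)).φ (X.obj.p i) = i from g.hom.hp i]
  exact ((Equiv.ofBijective _ X.property).symm_apply_apply i).symm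

noncomputable def homEq (X : ObjectProperty.FullSubcategory (fun A : TwObj I => Function.Bijective A.p)) (A : TwObj I) :
    ((ObjectProperty.ι _).obj X ⟶ A) ≃ (X ⟶ (Rfun I).obj A) where
  toFun := homFwd
  invFun := homBwd
  left_inv f := TwHom.ext' (by
    funext j
    show A.p ((Equiv.ofBijective _ X.property).symm j) = f.φ j
    conv_rhs => rw [← (Equiv.ofBijective _ X.property).apply_symm_apply j]
    exact (f.hp _).symm) rfl
  right_inv g := ObjectProperty.hom_ext _ (TwHom.ext' (by
    funext j
    exact ((gphi_eq g j).symm : _)) rfl)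

end Aux

/-- The full subcategory `⁰Tw(I) ⊆ Tw(I)` of diagrams `(I →ᵖ J → K)` where `p` is a
bijection. The inclusion admits a right adjoint `j^R` sending `(I →ᵖ J →ᑫ K)` to
`(I →^{id} I →^{q∘p} K)`. -/
theorem stmt2 (I : Type) [Finite I] [Nonempty I] :
    ∃ R : TwObj I ⥤ ObjectProperty.FullSubcategory (fun A : TwObj I => Function.Bijective A.p),
      Nonempty (ObjectProperty.ι (fun A : TwObj I => Function.Bijective A.p) ⊣ R) ∧
      ∀ A : TwObj I, (R.obj A).obj =
        { J := I, K := A.K, jFin := ‹Finite I›, kFin := A.kFin, jNe := ‹Nonempty I›,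
          kNe := A.kNe, p := _root_.id, q := A.q ∘ A.p,
          hp := Function.surjective_id, hq := A.hq.comp A.hp } := by
  refine ⟨Rfun I, ⟨Adjunction.mkOfHomEquiv
    { homEquiv := homEq
      homEquiv_naturality_left_symm := fun f g => TwHom.ext' (by rfl) (by rfl)
      homEquiv_naturality_right := fun f g => ObjectProperty.hom_ext _ (TwHom.ext' (by rfl) (by rfl)) }⟩,
    fun A => rfl⟩
end

section
/- Let φ : I ↠ I' be a surjection of finite nonempty sets, and for i' ∈ I' let I_{i'} = φ⁻¹(i'). Then the full subcategory Tw(I)_φ ⊆ Tw(I) of objects (I → J → K) for which I → K factors through φ is equivalent to the product category ∏_{i' ∈ I'} Tw(I_{i'}), via sending (I → J → K) to the collection of fiber diagrams (I_{i'} → J_{i'} → K_{i'}). -/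
open CategoryTheory Function Limits

/-- The fiber diagram `(I_{i'} → J_{i'} → K_{i'})` of a diagram `(I → J → K)` in
`Tw(I)_φ`, with respect to the (unique) factoring `g : K → I'` of `φ` through `I → K`. -/
def fiberObj {I I' : Type} (φ : I → I') (hφ : Function.Surjective φ) (A : TwObj I)
    (g : A.K → I') (hg : ∀ i, g (A.q (A.p i)) = φ i) (i' : I') :
    TwObj {i : I // φ i = i'} where
  J := {j : A.J // g (A.q j) = i'}
  K := {k : A.K // g k = i'}
  jFin := by have := A.jFin; exact Subtype.finite
  kFin := by have := A.kFin; exact Subtype.finite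
  jNe := by
    obtain ⟨i, hi⟩ := hφ i'
    exact ⟨⟨A.p i, by rw [hg]; exact hi⟩⟩
  kNe := by
    obtain ⟨i, hi⟩ := hφ i'
    exact ⟨⟨A.q (A.p i), by rw [hg]; exact hi⟩⟩
  p := fun i => ⟨A.p i.1, by rw [hg]; exact i.2⟩
  q := fun j => ⟨A.q j.1, j.2⟩
  hp := by
    rintro ⟨j, hj⟩
    obtain ⟨i, rfl⟩ := A.hp j
    exact ⟨⟨i, (hg i).symm.trans hj⟩, rfl⟩
  hq := by
    rintro ⟨k, hk⟩
    obtain ⟨j, rfl⟩ := A.hq k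
    exact ⟨⟨j, hk⟩, rfl⟩

section Aux

variable {I I' : Type} (φ : I → I') (hφ : Function.Surjective φ)

lemma g_unique (A : TwObj I) {g g' : A.K → I'}
    (hg : ∀ i, g (A.q (A.p i)) = φ i) (hg' : ∀ i, g' (A.q (A.p i)) = φ i) : g = g' := by
  funext k
  obtain ⟨j, rfl⟩ := A.hq k
  obtain ⟨i, rfl⟩ := A.hp j
  rw [hg, hg']

lemma fiberObj_congr (A : TwObj I) {g g' : A.K → I'} (h : g = g')
    (hg : ∀ i, g (A.q (A.p i)) = φ i) (hg' : ∀ i, g' (A.q (A.p i)) = φ i) (i' : I') :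
    fiberObj φ hφ A g hg i' = fiberObj φ hφ A g' hg' i' := by
  subst h; rfl

/-- The full subcategory of diagrams factoring through `φ`. -/
abbrev TwSub := ObjectProperty.FullSubcategory (fun A : TwObj I => ∃ g : A.K → I', ∀ i, g (A.q (A.p i)) = φ i)

/-- A chosen factoring of `φ` through `I → K`. -/
noncomputable def gOf (A : TwSub φ) : A.obj.K → I' := A.property.choose

lemma gOf_spec (A : TwSub φ) : ∀ i, gOf φ A (A.obj.q (A.obj.p i)) = φ i :=
  A.property.choose_spec

/-- Reinterpret a morphism of the full subcategory as a `TwHom`. -/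
def homOf {A B : TwSub φ} (f : A ⟶ B) : TwHom A.obj B.obj := f.hom

lemma g_comm {A B : TwSub φ} (f : TwHom A.obj B.obj) (k : B.obj.K) :
    gOf φ A (f.ψ k) = gOf φ B k := by
  obtain ⟨j, rfl⟩ := B.obj.hq k
  obtain ⟨i, rfl⟩ := B.obj.hp j
  rw [gOf_spec, ← f.hp i, f.hq, gOf_spec]

/-- The induced map on fiber diagrams. -/
noncomputable def fiberMap {A B : TwSub φ} (f : TwHom A.obj B.obj) (i' : I') :
    TwHom (fiberObj φ hφ A.obj (gOf φ A) (gOf_spec φ A) i')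
      (fiberObj φ hφ B.obj (gOf φ B) (gOf_spec φ B) i') where
  φ := fun j => ⟨f.φ j.1, by rw [← g_comm φ f, f.hq]; exact j.2⟩
  ψ := fun k => ⟨f.ψ k.1, (g_comm φ f k.1).trans k.2⟩
  hφ := by
    rintro ⟨j', hj'⟩
    obtain ⟨j, rfl⟩ := f.hφ j'
    exact ⟨⟨j, by rw [← f.hq j, g_comm φ f]; exact hj'⟩, rfl⟩
  hψ := by
    rintro ⟨k, hk⟩
    obtain ⟨k', rfl⟩ := f.hψ k
    exact ⟨⟨k', (g_comm φ f k').symm.trans hk⟩, rfl⟩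
  hp := fun i => Subtype.ext (f.hp i.1)
  hq := fun j => Subtype.ext (f.hq j.1)

/-- The fiber functor. -/
noncomputable def Ffun : TwSub φ ⥤ ∀ i' : I', TwObj {i : I // φ i = i'} where
  obj A := fun i' => fiberObj φ hφ A.obj (gOf φ A) (gOf_spec φ A) i'
  map {A B} f := fun i' => fiberMap φ hφ (homOf φ f) i'
  map_id A := by funext i'; exact TwHom.ext' rfl rfl
  map_comp f g := by funext i'; exact TwHom.ext' rfl rfl

section Rec

variable {A B : TwSub φ}
variable (t : ∀ i' : I', TwHom (fiberObj φ hφ A.obj (gOf φ A) (gOf_spec φ A) i')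
  (fiberObj φ hφ B.obj (gOf φ B) (gOf_spec φ B) i'))

/-- Recover the `J`-component of a morphism from its fiber components. -/
noncomputable def recφ : A.obj.J → B.obj.J :=
  fun j => ((t (gOf φ A (A.obj.q j))).φ ⟨j, rfl⟩).1

/-- Recover the `K`-component of a morphism from its fiber components. -/
noncomputable def recψ : B.obj.K → A.obj.K :=
  fun k => ((t (gOf φ B k)).ψ ⟨k, rfl⟩).1

lemma recφ_eq (j : A.obj.J) {i' : I'} (h : gOf φ A (A.obj.q j) = i') :
    recφ φ hφ t j = ((t i').φ ⟨j, h⟩).1 := by subst h; rfl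

lemma recψ_eq (k : B.obj.K) {i' : I'} (h : gOf φ B k = i') :
    recψ φ hφ t k = ((t i').ψ ⟨k, h⟩).1 := by subst h; rfl

/-- Recover a morphism from its fiber components. -/
noncomputable def recHom : TwHom A.obj B.obj where
  φ := recφ φ hφ t
  ψ := recψ φ hφ t
  hφ := by
    intro j'
    obtain ⟨⟨j, hj⟩, he⟩ := (t (gOf φ B (B.obj.q j'))).hφ ⟨j', rfl⟩
    exact ⟨j, (recφ_eq φ hφ t j hj).trans (congrArg Subtype.val he)⟩
  hψ := by
    intro k
    obtain ⟨⟨k', hk'⟩, he⟩ := (t (gOf φ A k)).hψ ⟨k, rfl⟩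
    exact ⟨k', (recψ_eq φ hφ t k' hk').trans (congrArg Subtype.val he)⟩
  hp := fun i => (recφ_eq φ hφ t (A.obj.p i) (gOf_spec φ A i)).trans
    (congrArg Subtype.val ((t (φ i)).hp ⟨i, rfl⟩))
  hq := by
    intro j
    have h2 : gOf φ B (B.obj.q (recφ φ hφ t j)) = gOf φ A (A.obj.q j) :=
      ((t (gOf φ A (A.obj.q j))).φ ⟨j, rfl⟩).2
    exact (recψ_eq φ hφ t _ h2).trans
      (congrArg Subtype.val ((t (gOf φ A (A.obj.q j))).hq ⟨j, rfl⟩))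

end Rec

variable [Finite I'] [Nonempty I']

/-- Pack a family of diagrams on the fibers into a single diagram over `I`. -/
def packObj (X : ∀ i' : I', TwObj {i : I // φ i = i'}) : TwObj I where
  J := Σ i', (X i').J
  K := Σ i', (X i').K
  jFin := by have : ∀ i', Finite (X i').J := fun i' => (X i').jFin; infer_instance
  kFin := by have : ∀ i', Finite (X i').K := fun i' => (X i').kFin; infer_instance
  jNe := by
    obtain ⟨i'⟩ := (inferInstance : Nonempty I')
    obtain ⟨j⟩ := (X i').jNe
    exact ⟨⟨i', j⟩⟩
  kNe := by
    obtain ⟨i'⟩ := (inferInstance : Nonempty I')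
    obtain ⟨k⟩ := (X i').kNe
    exact ⟨⟨i', k⟩⟩
  p := fun i => ⟨φ i, (X (φ i)).p ⟨i, rfl⟩⟩
  q := fun jj => ⟨jj.1, (X jj.1).q jj.2⟩
  hp := by
    rintro ⟨i', j⟩
    obtain ⟨⟨i, hi⟩, hpi⟩ := (X i').hp j
    subst hi
    exact ⟨i, congrArg (Sigma.mk (φ i)) hpi⟩
  hq := by
    rintro ⟨i', k⟩
    obtain ⟨j, hj⟩ := (X i').hq k
    exact ⟨⟨i', j⟩, congrArg (Sigma.mk i') hj⟩

/-- The packed diagram as an object of the full subcategory. -/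
def packSub (X : ∀ i' : I', TwObj {i : I // φ i = i'}) : TwSub φ :=
  ⟨packObj φ X, ⟨Sigma.fst, fun _ => rfl⟩⟩

/-- Transport along an equality of indices, `J` version. -/
def castJ (X : ∀ i' : I', TwObj {i : I // φ i = i'}) {i₁ i₂ : I'} (h : i₁ = i₂) :
    (X i₁).J → (X i₂).J := fun j => h ▸ j

/-- Transport along an equality of indices, `K` version. -/
def castK (X : ∀ i' : I', TwObj {i : I // φ i = i'}) {i₁ i₂ : I'} (h : i₁ = i₂) :
    (X i₁).K → (X i₂).K := fun k => h ▸ k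

/-- The comparison morphism from the fiber of the packed diagram to the original diagram. -/
def packHom (X : ∀ i' : I', TwObj {i : I // φ i = i'}) (i' : I') :
    TwHom (fiberObj φ hφ (packObj φ X) Sigma.fst (fun _ => rfl) i') (X i') where
  φ := fun jj => castJ φ X jj.2 jj.1.2
  ψ := fun k => ⟨⟨i', k⟩, rfl⟩
  hφ := fun j => ⟨⟨⟨i', j⟩, rfl⟩, rfl⟩
  hψ := by
    rintro ⟨⟨i'', k⟩, h⟩
    obtain rfl : i'' = i' := h
    exact ⟨k, rfl⟩
  hp := by rintro ⟨i, rfl⟩; rfl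
  hq := by
    rintro ⟨⟨i'', j⟩, h⟩
    obtain rfl : i'' = i' := h
    rfl

/-- The inverse comparison morphism. -/
def packInv (X : ∀ i' : I', TwObj {i : I // φ i = i'}) (i' : I') :
    TwHom (X i') (fiberObj φ hφ (packObj φ X) Sigma.fst (fun _ => rfl) i') where
  φ := fun j => ⟨⟨i', j⟩, rfl⟩
  ψ := fun kk => castK φ X kk.2 kk.1.2
  hφ := by
    rintro ⟨⟨i'', j⟩, h⟩
    obtain rfl : i'' = i' := h
    exact ⟨j, rfl⟩
  hψ := fun k => ⟨⟨⟨i', k⟩, rfl⟩, rfl⟩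
  hp := by rintro ⟨i, rfl⟩; rfl
  hq := fun j => rfl

end Aux

/-- For a surjection `φ : I ↠ I'`, the full subcategory `Tw(I)_φ ⊆ Tw(I)` of diagrams
`(I → J → K)` for which `φ` factors through `I → K` is equivalent to the product
`∏_{i' ∈ I'} Tw(I_{i'})` via sending a diagram to its collection of fiber diagrams. -/
theorem stmt4 (I I' : Type) [Finite I] [Nonempty I] [Finite I'] [Nonempty I']
    (φ : I → I') (hφ : Function.Surjective φ) :
    ∃ F : ObjectProperty.FullSubcategory (fun A : TwObj I => ∃ g : A.K → I', ∀ i, g (A.q (A.p i)) = φ i)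
        ⥤ (∀ i' : I', TwObj {i : I // φ i = i'}),
      F.IsEquivalence ∧
      ∀ (A : ObjectProperty.FullSubcategory
          (fun A : TwObj I => ∃ g : A.K → I', ∀ i, g (A.q (A.p i)) = φ i))
        (g : A.obj.K → I') (hg : ∀ i, g (A.obj.q (A.obj.p i)) = φ i) (i' : I'),
        F.obj A i' = fiberObj φ hφ A.obj g hg i' := by
  refine ⟨Ffun φ hφ, ⟨?_, ?_, ?_⟩, ?_⟩
  · -- faithful
    refine ⟨fun {A B f g} h => ?_⟩
    refine ObjectProperty.hom_ext (h := TwHom.ext' ?_ ?_)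
    · funext j
      have h1 := congrFun h (gOf φ A (A.obj.q j))
      have h2 := congrFun (congrArg TwHom.φ h1) ⟨j, rfl⟩
      exact congrArg Subtype.val h2
    · funext k
      have h1 := congrFun h (gOf φ B k)
      have h2 := congrFun (congrArg TwHom.ψ h1) ⟨k, rfl⟩
      exact congrArg Subtype.val h2
  · -- full
    refine ⟨fun {A B} t => ⟨ObjectProperty.homMk (recHom φ hφ t), ?_⟩⟩
    funext i'
    refine TwHom.ext' ?_ ?_
    · funext j
      exact Subtype.ext (recφ_eq φ hφ t j.1 j.2)
    · funext k
      exact Subtype.ext (recψ_eq φ hφ t k.1 k.2)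
  · -- essentially surjective
    refine ⟨fun X => ⟨packSub φ X, ⟨?_⟩⟩⟩
    have hobj : (Ffun φ hφ).obj (packSub φ X) =
        fun i' => fiberObj φ hφ (packObj φ X) Sigma.fst (fun _ => rfl) i' :=
      funext fun i' => fiberObj_congr φ hφ _
        (g_unique φ _ (gOf_spec φ (packSub φ X)) (fun _ => rfl))
        (gOf_spec φ (packSub φ X)) (fun _ => rfl) i'
    refine eqToIso hobj ≪≫ ?_
    refine ⟨fun i' => packHom φ hφ X i', fun i' => packInv φ hφ X i', ?_, ?_⟩
    · funext i'
      refine TwHom.ext' ?_ ?_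
      · funext jj
        obtain ⟨⟨i'', j⟩, h⟩ := jj
        obtain rfl : i'' = i' := h
        rfl
      · funext kk
        obtain ⟨⟨i'', k⟩, h⟩ := kk
        obtain rfl : i'' = i' := h
        rfl
    · funext i'
      exact TwHom.ext' rfl rfl
  · intro A g hg i'
    exact fiberObj_congr φ hφ A.obj (g_unique φ A.obj (gOf_spec φ A) hg) (gOf_spec φ A) hg i'
end

section
/- Let I be a finite set with |I| ≥ 2 and f : I → * the map to a point. Let Tw(I)^{>1} ⊆ Tw(I) be the full subcategory of objects (I → J → K) with |J| > 1, and Tw(I)^f ⊆ Tw(I) the full subcategory of objects with K = * (a singleton). Then: (a) every object of Tw(I) lies in Tw(I)^{>1} or in Tw(I)^f; (b) for every morphism Σ₁ → Σ₂ in Tw(I), if Σ₂ ∈ Tw(I)^f then Σ₁ ∈ Tw(I)^f, and if Σ₂ ∈ Tw(I)^{>1} then Σ₁ ∈ Tw(I)^{>1}. Consequently the square of full inclusions with corners Tw(I)^{>1} ∩ Tw(I)^f, Tw(I)^{>1}, Tw(I)^f, Tw(I) is cocartesian in the category of small categories. -/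
open CategoryTheory Function Limits

namespace TwGlue

variable {I : Type}

lemma subJ {A : TwObj I} (h : ¬ 1 < Nat.card A.J) : Subsingleton A.K := by
  haveI : Finite A.J := A.jFin
  haveI : Nonempty A.J := A.jNe
  have h1 : Nat.card A.J = 1 := le_antisymm (not_lt.mp h) Nat.card_pos
  haveI : Subsingleton A.J := (Nat.card_eq_one_iff_unique.mp h1).1
  exact A.hq.subsingleton

lemma notP_Q {A : TwObj I} (h : ¬ Subsingleton A.K) : 1 < Nat.card A.J := by
  by_contra h'; exact h (subJ h')

lemma homP {A B : TwObj I} (f : TwHom A B) (h : Subsingleton B.K) : Subsingleton A.K := by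
  haveI := h; exact f.hψ.subsingleton

lemma homQ {A B : TwObj I} (f : TwHom A B) (h : 1 < Nat.card B.J) : 1 < Nat.card A.J := by
  haveI : Finite A.J := A.jFin
  exact lt_of_lt_of_le h (Nat.card_le_card_of_surjective f.φ f.hφ)

section Glue

variable {C : Type*} [Category C]
variable (F : ObjectProperty.FullSubcategory (fun A : TwObj I => 1 < Nat.card A.J) ⥤ C)
variable (G : ObjectProperty.FullSubcategory (fun A : TwObj I => Subsingleton A.K) ⥤ C)
variable (w : ObjectProperty.ιOfLE
      (P := fun A : TwObj I => 1 < Nat.card A.J ∧ Subsingleton A.K) (fun _ h => h.1) ⋙ F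
    = ObjectProperty.ιOfLE (fun _ h => h.2) ⋙ G)

open scoped Classical in
noncomputable def glueObj (A : TwObj I) : C :=
  if h : Subsingleton A.K then G.obj ⟨A, h⟩ else F.obj ⟨A, notP_Q h⟩

lemma objP (A : TwObj I) (hA : Subsingleton A.K) : glueObj F G A = G.obj ⟨A, hA⟩ :=
  dif_pos hA

include w in
lemma objQ (A : TwObj I) (hA : 1 < Nat.card A.J) : glueObj F G A = F.obj ⟨A, hA⟩ := by
  by_cases h : Subsingleton A.K
  · rw [objP F G A h]
    exact (Functor.congr_obj w ⟨A, hA, h⟩).symm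
  · exact dif_neg h

lemma wHom {A B : TwObj I} (f : A ⟶ B) (hA : 1 < Nat.card A.J) (hA' : Subsingleton A.K)
    (hB : 1 < Nat.card B.J) (hB' : Subsingleton B.K) :
    F.map (X := ⟨A, hA⟩) (Y := ⟨B, hB⟩) (ObjectProperty.homMk f)
      = eqToHom (Functor.congr_obj w ⟨A, hA, hA'⟩)
        ≫ G.map (X := ⟨A, hA'⟩) (Y := ⟨B, hB'⟩) (ObjectProperty.homMk f)
        ≫ eqToHom (Functor.congr_obj w ⟨B, hB, hB'⟩).symm :=
  Functor.congr_hom w (X := ⟨A, hA, hA'⟩) (Y := ⟨B, hB, hB'⟩) (ObjectProperty.homMk f)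

open scoped Classical in
noncomputable def glueMap {A B : TwObj I} (f : A ⟶ B) : glueObj F G A ⟶ glueObj F G B :=
  if hB : Subsingleton B.K then
    eqToHom (objP F G A (homP f hB))
      ≫ G.map (X := ⟨A, homP f hB⟩) (Y := ⟨B, hB⟩) (ObjectProperty.homMk f)
      ≫ eqToHom (objP F G B hB).symm
  else
    eqToHom (objQ F G w A (homQ f (notP_Q hB)))
      ≫ F.map (X := ⟨A, homQ f (notP_Q hB)⟩) (Y := ⟨B, notP_Q hB⟩) (ObjectProperty.homMk f)
      ≫ eqToHom (objQ F G w B (notP_Q hB)).symm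

lemma glueMapP {A B : TwObj I} (f : A ⟶ B) (hB : Subsingleton B.K) :
    glueMap F G w f
      = eqToHom (objP F G A (homP f hB))
        ≫ G.map (X := ⟨A, homP f hB⟩) (Y := ⟨B, hB⟩) (ObjectProperty.homMk f)
        ≫ eqToHom (objP F G B hB).symm := by
  unfold glueMap
  rw [dif_pos hB]

lemma glueMapQ {A B : TwObj I} (f : A ⟶ B) (hB : ¬ Subsingleton B.K) :
    glueMap F G w f
      = eqToHom (objQ F G w A (homQ f (notP_Q hB)))
        ≫ F.map (X := ⟨A, homQ f (notP_Q hB)⟩) (Y := ⟨B, notP_Q hB⟩) (ObjectProperty.homMk f)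
        ≫ eqToHom (objQ F G w B (notP_Q hB)).symm := by
  unfold glueMap
  rw [dif_neg hB]

noncomputable def glue : TwObj I ⥤ C where
  obj := glueObj F G
  map f := glueMap F G w f
  map_id A := by
    show glueMap F G w (𝟙 A) = 𝟙 (glueObj F G A)
    by_cases hA : Subsingleton A.K
    · rw [glueMapP F G w (𝟙 A) hA]
      rw [show G.map (X := ⟨A, homP (𝟙 A) hA⟩) (Y := ⟨A, hA⟩) (ObjectProperty.homMk (𝟙 A)) = 𝟙 _ from
        G.map_id ⟨A, hA⟩]
      simp
    · rw [glueMapQ F G w (𝟙 A) hA]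
      rw [show F.map (X := ⟨A, homQ (𝟙 A) (notP_Q hA)⟩) (Y := ⟨A, notP_Q hA⟩) (ObjectProperty.homMk (𝟙 A)) = 𝟙 _ from
        F.map_id ⟨A, notP_Q hA⟩]
      simp
  map_comp {A B C'} f g := by
    show glueMap F G w (f ≫ g) = glueMap F G w f ≫ glueMap F G w g
    by_cases hC : Subsingleton C'.K
    · have hB := homP g hC
      have hA := homP f hB
      rw [glueMapP F G w (f ≫ g) hC, glueMapP F G w f hB, glueMapP F G w g hC]
      have e : G.map (X := ⟨A, homP (f ≫ g) hC⟩) (Y := ⟨C', hC⟩) (ObjectProperty.homMk (f ≫ g : A ⟶ C'))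
          = G.map (X := ⟨A, hA⟩) (Y := ⟨B, hB⟩) (ObjectProperty.homMk f) ≫ G.map (X := ⟨B, hB⟩) (Y := ⟨C', hC⟩) (ObjectProperty.homMk g) :=
        G.map_comp (X := ⟨A, hA⟩) (Y := ⟨B, hB⟩) (Z := ⟨C', hC⟩) (ObjectProperty.homMk f) (ObjectProperty.homMk g)
      rw [e]
      simp
    · have hQC := notP_Q hC
      have hQB := homQ g hQC
      have hQA := homQ f hQB
      rw [glueMapQ F G w (f ≫ g) hC, glueMapQ F G w g hC]
      have e : F.map (X := ⟨A, homQ (f ≫ g) (notP_Q hC)⟩) (Y := ⟨C', notP_Q hC⟩) (ObjectProperty.homMk (f ≫ g : A ⟶ C'))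
          = F.map (X := ⟨A, hQA⟩) (Y := ⟨B, hQB⟩) (ObjectProperty.homMk f)
            ≫ F.map (X := ⟨B, hQB⟩) (Y := ⟨C', notP_Q hC⟩) (ObjectProperty.homMk g) :=
        F.map_comp (X := ⟨A, hQA⟩) (Y := ⟨B, hQB⟩) (Z := ⟨C', notP_Q hC⟩) (ObjectProperty.homMk f) (ObjectProperty.homMk g)
      rw [e]
      by_cases hB : Subsingleton B.K
      · have hA := homP f hB
        rw [glueMapP F G w f hB]
        rw [wHom F G w f hQA hA hQB hB]
        simp
      · rw [glueMapQ F G w f hB]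
        simp

lemma glue_facQ :
    ObjectProperty.ι (fun A : TwObj I => 1 < Nat.card A.J) ⋙ glue F G w = F := by
  refine CategoryTheory.Functor.ext (fun X => objQ F G w X.obj X.property) ?_
  intro X Y f
  show glueMap F G w f.hom = _
  by_cases hY : Subsingleton Y.obj.K
  · rw [glueMapP F G w f.hom hY]
    rw [show F.map f = F.map (X := ⟨X.obj, X.property⟩) (Y := ⟨Y.obj, Y.property⟩) (ObjectProperty.homMk f.hom) from rfl]
    rw [wHom F G w f.hom X.property (homP f.hom hY) Y.property hY]
    show eqToHom (objP F G X.obj (homP f.hom hY)) ≫ _ = eqToHom (objQ F G w X.obj X.property)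
      ≫ (eqToHom _ ≫ _ ≫ eqToHom _) ≫ eqToHom (objQ F G w Y.obj Y.property).symm
    simp
  · rw [glueMapQ F G w f.hom hY]
    rfl

lemma glue_facP :
    ObjectProperty.ι (fun A : TwObj I => Subsingleton A.K) ⋙ glue F G w = G := by
  refine CategoryTheory.Functor.ext (fun X => objP F G X.obj X.property) ?_
  intro X Y f
  show glueMap F G w f.hom = _
  rw [glueMapP F G w f.hom Y.property]
  rfl

lemma glue_unique {H₁ H₂ : TwObj I ⥤ C}
    (h1 : ObjectProperty.ι (fun A : TwObj I => 1 < Nat.card A.J) ⋙ H₁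
        = ObjectProperty.ι (fun A : TwObj I => 1 < Nat.card A.J) ⋙ H₂)
    (h2 : ObjectProperty.ι (fun A : TwObj I => Subsingleton A.K) ⋙ H₁
        = ObjectProperty.ι (fun A : TwObj I => Subsingleton A.K) ⋙ H₂) :
    H₁ = H₂ := by
  have hobj : ∀ A : TwObj I, H₁.obj A = H₂.obj A := by
    intro A
    by_cases h : Subsingleton A.K
    · exact Functor.congr_obj h2 ⟨A, h⟩
    · exact Functor.congr_obj h1 ⟨A, notP_Q h⟩
  refine CategoryTheory.Functor.ext hobj ?_
  intro A B f
  by_cases hB : Subsingleton B.K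
  · exact Functor.congr_hom h2 (X := ⟨A, homP f hB⟩) (Y := ⟨B, hB⟩) (ObjectProperty.homMk f)
  · exact Functor.congr_hom h1 (X := ⟨A, homQ f (notP_Q hB)⟩) (Y := ⟨B, notP_Q hB⟩) (ObjectProperty.homMk f)

end Glue

end TwGlue

/-- For `|I| ≥ 2`: (a) every object of `Tw(I)` lies in `Tw(I)^{>1}` (i.e. `|J| > 1`) or
in `Tw(I)^f` (i.e. `K` is a singleton); (b) both subcategories are closed under taking
the source of a morphism; consequently the square of full inclusions is cocartesian in
the category of small categories. -/
theorem stmt7 (I : Type) [Finite I] (hI : 1 < Nat.card I) :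
    (∀ A : TwObj I, 1 < Nat.card A.J ∨ Subsingleton A.K) ∧
    (∀ (A B : TwObj I), (A ⟶ B) →
        (Subsingleton B.K → Subsingleton A.K) ∧ (1 < Nat.card B.J → 1 < Nat.card A.J)) ∧
    IsPushout
      (Z := Cat.of (ObjectProperty.FullSubcategory fun A : TwObj I => 1 < Nat.card A.J ∧ Subsingleton A.K))
      (X := Cat.of (ObjectProperty.FullSubcategory fun A : TwObj I => 1 < Nat.card A.J))
      (Y := Cat.of (ObjectProperty.FullSubcategory fun A : TwObj I => Subsingleton A.K))
      (P := Cat.of (TwObj I))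
      (ObjectProperty.ιOfLE fun _ h => h.1).toCatHom
      (ObjectProperty.ιOfLE fun _ h => h.2).toCatHom
      (ObjectProperty.ι fun A : TwObj I => 1 < Nat.card A.J).toCatHom
      (ObjectProperty.ι fun A : TwObj I => Subsingleton A.K).toCatHom := by
  refine ⟨fun A => or_iff_not_imp_left.mpr (fun h => TwGlue.subJ h),
    fun A B f => ⟨TwGlue.homP f, TwGlue.homQ f⟩, ?_⟩
  have comm : (ObjectProperty.ιOfLE
        (P := fun A : TwObj I => 1 < Nat.card A.J ∧ Subsingleton A.K)
        (P' := fun A : TwObj I => 1 < Nat.card A.J) (fun _ h => h.1)).toCatHom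
        ≫ (ObjectProperty.ι fun A : TwObj I => 1 < Nat.card A.J).toCatHom
      = (ObjectProperty.ιOfLE (P' := fun A : TwObj I => Subsingleton A.K) (fun _ h => h.2)).toCatHom
        ≫ (ObjectProperty.ι fun A : TwObj I => Subsingleton A.K).toCatHom := rfl
  refine IsPushout.of_isColimit' ⟨comm⟩ ?_
  exact PushoutCocone.IsColimit.mk comm
    (fun s => (TwGlue.glue s.inl.toFunctor s.inr.toFunctor (congrArg Cat.Hom.toFunctor s.condition)).toCatHom)
    (fun s => Cat.Hom.ext (TwGlue.glue_facQ s.inl.toFunctor s.inr.toFunctor (congrArg Cat.Hom.toFunctor s.condition)))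
    (fun s => Cat.Hom.ext (TwGlue.glue_facP s.inl.toFunctor s.inr.toFunctor (congrArg Cat.Hom.toFunctor s.condition)))
    (fun s m h₁ h₂ => Cat.Hom.ext (TwGlue.glue_unique
      ((congrArg Cat.Hom.toFunctor h₁).trans (TwGlue.glue_facQ s.inl.toFunctor s.inr.toFunctor (congrArg Cat.Hom.toFunctor s.condition)).symm)
      ((congrArg Cat.Hom.toFunctor h₂).trans (TwGlue.glue_facP s.inl.toFunctor s.inr.toFunctor (congrArg Cat.Hom.toFunctor s.condition)).symm)))
end

section
/- Let A be a finite nonempty set and 𝒜 any set. Let fSets_A be the category whose objects are pairs (I, α) of a finite nonempty set I with a map α : A → I, and whose morphisms (I₁, α₁) → (I₂, α₂) are surjections φ : I₁ → I₂ with φ ∘ α₁ = α₂. Consider the functor κ : (fSets_A)^op → Set sending (I, α) to the set Map(I, 𝒜) of all functions I → 𝒜, with transition maps given by precomposition. Then colim_{(fSets_A)^op} κ is in natural bijection with the set of pairs (ℐ, β), where ℐ ⊆ 𝒜 is a finite nonempty subset and β : A → ℐ is a map; the bijection sends the class of f : I → 𝒜 to (f(I), f ∘ α). -/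
open CategoryTheory Function Limits

/-- An object of `fSets_A`: a finite nonempty set `I` with a marking `α : A → I`. -/
structure MarkedSet (A : Type) : Type 1 where
  I : Type
  iFin : Finite I
  iNe : Nonempty I
  mark : A → I

structure MarkedHom {A : Type} (X Y : MarkedSet A) : Type where
  τ : X.I → Y.I
  hτ : Function.Surjective τ
  hm : ∀ a, τ (X.mark a) = Y.mark a

theorem MarkedHom.ext' {A : Type} {X Y : MarkedSet A} :
    ∀ {f g : MarkedHom X Y}, f.τ = g.τ → f = g
  | ⟨_, _, _⟩, ⟨_, _, _⟩, rfl => rfl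

instance {A : Type} : Category (MarkedSet A) where
  Hom := MarkedHom
  id X := ⟨_root_.id, Function.surjective_id, fun _ => rfl⟩
  comp := fun f g => ⟨g.τ ∘ f.τ, g.hτ.comp f.hτ,
    fun a => by simp only [Function.comp_apply, f.hm, g.hm]⟩
  id_comp := fun f => MarkedHom.ext' rfl
  comp_id := fun f => MarkedHom.ext' rfl
  assoc := fun f g h => MarkedHom.ext' rfl

/-- The functor `κ : (fSets_A)^op → Set`, `(I, α) ↦ Map(I, 𝒜)`, with transitions given
by precomposition. -/
def kappa (A 𝒜 : Type) : (MarkedSet A)ᵒᵖ ⥤ Type where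
  obj X := X.unop.I → 𝒜
  map h := TypeCat.ofHom fun f => f ∘ h.unop.τ
  map_id _ := rfl
  map_comp _ _ := rfl

/-- The set of pairs `(ℐ, β)` of a finite nonempty subset `ℐ ⊆ 𝒜` with a marking
`β : A → ℐ` (encoded as a function `A → 𝒜` with values in `ℐ`). -/
def RanPt (A 𝒜 : Type) : Type :=
  {p : Set 𝒜 × (A → 𝒜) // p.1.Finite ∧ p.1.Nonempty ∧ ∀ a, p.2 a ∈ p.1}

/-- The cocone over `κ` with apex `RanPt`, whose components send `f : I → 𝒜` to the
pair `(f(I), f ∘ α)`. -/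
def iotaCocone (A 𝒜 : Type) : Limits.Cocone (kappa A 𝒜) where
  pt := RanPt A 𝒜
  ι :=
    { app := fun X => TypeCat.ofHom fun f => ⟨(Set.range f, fun a => f (X.unop.mark a)),
        (by have := X.unop.iFin; exact Set.finite_range f),
        (by have := X.unop.iNe; exact Set.range_nonempty f),
        fun a => Set.mem_range_self _⟩
      naturality := by
        intro X Y h
        ext f
        refine Subtype.ext (Prod.ext ?_ ?_)
        · exact h.unop.hτ.range_comp f
        · funext a
          exact congrArg f (h.unop.hm a) }

/-- The object of `fSets_A` attached to a point of `RanPt`. -/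
def RanPt.obj {A 𝒜 : Type} (p : RanPt A 𝒜) : MarkedSet A :=
  ⟨p.1.1, p.2.1.to_subtype, p.2.2.1.to_subtype, fun a => ⟨p.1.2 a, p.2.2.2 a⟩⟩

/-- `colim_{(fSets_A)^op} κ` is in natural bijection with the set of pairs `(ℐ, β)` of
a finite nonempty subset `ℐ ⊆ 𝒜` and a marking `β : A → ℐ`, via
`f ↦ (f(I), f ∘ α)`. -/
theorem stmt12 (A 𝒜 : Type) [Finite A] [Nonempty A] :
    Nonempty (Limits.IsColimit (iotaCocone A 𝒜)) := by
  constructor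
  refine { desc := fun s => TypeCat.ofHom fun p => s.ι.app (Opposite.op p.obj) Subtype.val,
           fac := ?_, uniq := ?_ }
  · intro s X
    ext f
    let φ : X.unop ⟶ ((iotaCocone A 𝒜).ι.app X f).obj :=
      ⟨Set.rangeFactorization f, Set.rangeFactorization_surjective, fun a => rfl⟩
    have h := ConcreteCategory.congr_hom (s.ι.naturality φ.op) (Subtype.val (p := (· ∈ Set.range f)))
    simp only [Functor.const_obj_map, types_comp_apply, types_id_apply,
      Category.comp_id] at h
    have hk : (kappa A 𝒜).map φ.op (Subtype.val (p := (· ∈ Set.range f))) = f :=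
      funext fun x => rfl
    exact h.symm
  · intro s m hm
    ext p
    have hp : (iotaCocone A 𝒜).ι.app (Opposite.op p.obj) Subtype.val = p := by
      refine Subtype.ext (Prod.ext ?_ rfl)
      exact Subtype.range_val
    have h2 := ConcreteCategory.congr_hom (hm (Opposite.op p.obj)) (Subtype.val (p := (· ∈ p.1.1)))
    calc m p = m ((iotaCocone A 𝒜).ι.app (Opposite.op p.obj) Subtype.val) := by rw [hp]
    _ = s.ι.app (Opposite.op p.obj) Subtype.val := h2
end
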